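/- Fix rate constants κ₁,…,κ₁₂ ∈ ℝ_{>0} and consider the polynomials in ℝ[x₁,…,x₈]: p₁ = −κ₁x₁x₄ + κ₂x₅ + κ₁₂x₈; p₂ = κ₃x₅ + κ₅x₆ − κ₄x₂x₄ − κ₇x₂x₅ + κ₈x₇; p₃ = κ₆x₆ + κ₉x₇ − κ₁₀x₃x₅ + κ₁₁x₈; p₄ = −κ₁x₁x₄ + (κ₂+κ₃)x₅ − κ₄x₂x₄ + (κ₅+κ₆)x₆; p₅ = κ₁x₁x₄ − (κ₂+κ₃)x₅ − κ₇x₂x₅ + (κ₈+κ₉)x₇ − κ₁₀x₃x₅ + (κ₁₁+κ₁₂)x₈; p₆ = κ₄x₂x₄ − (κ₅+κ₆)x₆; p₇ = κ₇x₂x₅ − (κ₈+κ₉)x₇; p₈ = κ₁₀x₃x₅ − (κ₁₁+κ₁₂)x₈ (the steady-state polynomials of the Joshi–Nguyen bifunctional-enzyme network). Then every point x ∈ ℝ⁸_{>0} with p₁(x) = ⋯ = p₈(x) = 0 satisfies x₃ = κ₃(κ₁₁+κ₁₂)/(κ₁₀κ₁₂); that is, for every choice of positive rate constants the system has ACR in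 the species S₃ (the third species) with ACR-value κ₃(κ₁₁+κ₁₂)/(κ₁₀κ₁₂). -/

import Mathlib

/-- The Joshi–Nguyen bifunctional-enzyme network has ACR in `S₃` (the third species, `x 2`)
with ACR-value `κ₃(κ₁₁+κ₁₂)/(κ₁₀κ₁₂)`, for every choice of positive rate constants.
Here `κ 0, …, κ 11` are `κ₁, …, κ₁₂` and `x 0, …, x 7` are `x₁, …, x₈`. -/
theorem stmt_15 (κ : Fin 12 → ℝ) (hκ : ∀ j, 0 < κ j)
    (x : Fin 8 → ℝ) (hx : ∀ j, 0 < x j)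
    (h1 : -κ 0 * x 0 * x 3 + κ 1 * x 4 + κ 11 * x 7 = 0)
    (h2 : κ 2 * x 4 + κ 4 * x 5 - κ 3 * x 1 * x 3 - κ 6 * x 1 * x 4 + κ 7 * x 6 = 0)
    (h3 : κ 5 * x 5 + κ 8 * x 6 - κ 9 * x 2 * x 4 + κ 10 * x 7 = 0)
    (h4 : -κ 0 * x 0 * x 3 + (κ 1 + κ 2) * x 4 - κ 3 * x 1 * x 3 + (κ 4 + κ 5) * x 5 = 0)
    (h5 : κ 0 * x 0 * x 3 - (κ 1 + κ 2) * x 4 - κ 6 * x 1 * x 4 + (κ 7 + κ 8) * x 6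
            - κ 9 * x 2 * x 4 + (κ 10 + κ 11) * x 7 = 0)
    (h6 : κ 3 * x 1 * x 3 - (κ 4 + κ 5) * x 5 = 0)
    (h7 : κ 6 * x 1 * x 4 - (κ 7 + κ 8) * x 6 = 0)
    (h8 : κ 9 * x 2 * x 4 - (κ 10 + κ 11) * x 7 = 0) :
    x 2 = κ 2 * (κ 10 + κ 11) / (κ 9 * κ 11) := by
  have key : κ 2 * x 4 = κ 11 * x 7 := by linarith
  have hcancel : x 2 * (κ 9 * κ 11) * x 4 = κ 2 * (κ 10 + κ 11) * x 4 := by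
    linear_combination κ 11 * h8 - (κ 10 + κ 11) * key
  have h2' : x 2 * (κ 9 * κ 11) = κ 2 * (κ 10 + κ 11) :=
    mul_right_cancel₀ (hx 4).ne' hcancel
  have hne : κ 9 * κ 11 ≠ 0 := mul_ne_zero (hκ 9).ne' (hκ 11).ne'
  field_simp
  rw [eq_div_iff (mul_ne_zero (hκ 11).ne' (hκ 9).ne')]
  linarith [h2']
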